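/- Let M be a left cancellative monoid of finite right geometric type, finitely generated by S, acting on itself by left translation with word semimetric d_S. Then the action is outward proper: for every finite-radius out-ball B ⊆ M, the set { m ∈ M | d_S(B, mB) = 0 } is finite, where d_S(A,B) = inf{ d_S(a,b) | a∈A, b∈B }. -/

import Mathlib

open scoped ENNReal NNReal

def IsSemimetric {X : Type*} (d : X → X → ℝ≥0∞) : Prop :=
  (∀ x y, d x y = 0 ↔ x = y) ∧ ∀ x y z, d x z ≤ d x y + d y z

noncomputable def wordDist {M : Type*} [Monoid M] (S : Set M) (x y : M) : ℝ≥0∞ :=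
  sInf {n : ℝ≥0∞ | ∃ w : List M, (∀ s ∈ w, s ∈ S) ∧ x * w.prod = y ∧ n = w.length}

noncomputable def setDist {X : Type*} (d : X → X → ℝ≥0∞) (A B : Set X) : ℝ≥0∞ :=
  ⨅ a ∈ A, ⨅ b ∈ B, d a b

lemma wordDist_extract {M : Type*} [Monoid M] (S : Set M) (x y : M) (N : ℕ)
    (h : wordDist S x y < (N : ℝ≥0∞) + 1) :
    ∃ w : List M, (∀ s ∈ w, s ∈ S) ∧ x * w.prod = y ∧ w.length ≤ N := by
  obtain ⟨n, hn, hlt⟩ := sInf_lt_iff.mp h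
  obtain ⟨w, hw, hp, hlen⟩ := hn
  refine ⟨w, hw, hp, ?_⟩
  subst hlen
  have : ((w.length : ℝ≥0∞)) < ((N + 1 : ℕ) : ℝ≥0∞) := by
    simpa [Nat.cast_add] using hlt
  exact Nat.lt_succ_iff.mp (by exact_mod_cast this)

lemma wordDist_eq_zero {M : Type*} [Monoid M] (S : Set M) (x y : M)
    (h : wordDist S x y < 1) : x = y := by
  have h' : wordDist S x y < ((0 : ℕ) : ℝ≥0∞) + 1 := by simpa using h
  obtain ⟨w, _, hp, hlen⟩ := wordDist_extract S x y 0 h'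
  have : w = [] := List.eq_nil_of_length_eq_zero (Nat.le_zero.mp hlen)
  subst this
  simpa using hp

lemma ball_finite {M : Type*} [Monoid M] {S : Set M} (hS : S.Finite) :
    ∀ (N : ℕ) (x₀ : M),
      {y : M | ∃ w : List M, (∀ s ∈ w, s ∈ S) ∧ x₀ * w.prod = y ∧ w.length ≤ N}.Finite := by
  intro N
  induction N with
  | zero =>
    intro x₀
    apply (Set.finite_singleton x₀).subset
    rintro y ⟨w, _, hp, hl⟩
    have : w = [] := List.eq_nil_of_length_eq_zero (Nat.le_zero.mp hl)
    subst this
    simp_all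
  | succ N ih =>
    intro x₀
    apply Set.Finite.subset ((Set.finite_singleton x₀).union
      (Set.Finite.biUnion hS (fun s _ => ih (x₀ * s))))
    rintro y ⟨w, hw, hp, hl⟩
    cases w with
    | nil =>
      left; simp_all
    | cons s w' =>
      right
      refine Set.mem_biUnion (hw s (List.mem_cons_self (a := s) (l := w'))) ?_
      exact ⟨w', fun t ht => hw t (List.mem_cons_of_mem s ht),
        by simpa [mul_assoc] using hp, Nat.succ_le_succ_iff.mp hl⟩

theorem stmt_8 {M : Type*} [Monoid M] (S : Set M) (hS : S.Finite)
    (hgen : Submonoid.closure S = ⊤)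
    (hlc : ∀ m x y : M, m * x = m * y → x = y)
    (hfgt : ∀ b c : M, {a : M | a * b = c}.Finite)
    (x₀ : M) (r : ℝ≥0∞) (hr : r ≠ ∞) :
    {m : M | setDist (wordDist S) {y | wordDist S x₀ y ≤ r}
      ((fun y => m * y) '' {y | wordDist S x₀ y ≤ r}) = 0}.Finite := by
  obtain ⟨N, hN⟩ := ENNReal.exists_nat_gt hr
  set B : Set M := {y | wordDist S x₀ y ≤ r} with hB
  have hBfin : B.Finite := by
    apply (ball_finite hS N x₀).subset
    intro y hy
    have : wordDist S x₀ y < (N : ℝ≥0∞) + 1 :=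
      lt_of_le_of_lt hy (hN.trans_le le_self_add)
    obtain ⟨w, hw, hp, hl⟩ := wordDist_extract S x₀ y N this
    exact ⟨w, hw, hp, hl⟩
  apply Set.Finite.subset (Set.Finite.biUnion hBfin (fun b _ =>
    Set.Finite.biUnion hBfin (fun a _ => hfgt b a)))
  intro m hm
  have hm' : setDist (wordDist S) B ((fun y => m * y) '' B) < 1 := by
    rw [Set.mem_setOf_eq] at hm
    rw [hm]; exact zero_lt_one
  simp only [setDist, iInf_lt_iff] at hm'
  obtain ⟨a, ha, c, hc, hd⟩ := hm'
  obtain ⟨b, hb, rfl⟩ := hc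
  have : a = m * b := wordDist_eq_zero S a (m * b) hd
  exact Set.mem_biUnion hb (Set.mem_biUnion ha this.symm)
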